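/- Let δ ~ N(0,1), s > 0, Δ ∈ ℝ, ε ∈ [0, 1/2], β > 0, and let σ(x) = clip(x + 1/2, 0, 1). Define y_ε(x) as a {−1,1}-valued random variable independent of everything else given its parameter, equal to 1 with probability ε + (1−2ε)σ(x). Then α(Δ, s, β, ε) := E[y_ε(s(Δ + βδ)) · δ] = (1−2ε)·s·β·(erf((Δ + 1/(2s))/(β√2)) − erf((Δ − 1/(2s))/(β√2))). -/

import Mathlib

open MeasureTheory ProbabilityTheory Real
open scoped ENNReal NNReal

/-- The error function `erf x = (2/√π) ∫₀ˣ e^{-t²} dt`. -/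
noncomputable def erf (x : ℝ) : ℝ := (2 / Real.sqrt π) * ∫ t in (0:ℝ)..x, Real.exp (-t ^ 2)

lemma erf_neg (x : ℝ) : erf (-x) = - erf x := by
  have h2 : (∫ t in (0:ℝ)..x, Real.exp (-t ^ 2))
      = ∫ t in (-x)..(0:ℝ), Real.exp (-t ^ 2) := by
    have h := intervalIntegral.integral_comp_neg (a := (0:ℝ)) (b := x)
      (f := fun t => Real.exp (-t ^ 2))
    simp only [neg_sq, neg_zero] at h
    exact h
  unfold erf
  rw [show (∫ t in (0:ℝ)..(-x), Real.exp (-t ^ 2))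
      = -∫ t in (-x)..(0:ℝ), Real.exp (-t ^ 2) from intervalIntegral.integral_symm _ _, ← h2]
  ring

lemma clip_eq (ε u : ℝ) :
    2 * (ε + (1 - 2 * ε) * min (max (u + 1 / 2) 0) 1) - 1
      = (1 - 2 * ε) * min (max (2 * u) (-1)) 1 := by
  rcases le_total (u + 1 / 2) 0 with h | h
  · rw [max_eq_right h, min_eq_left zero_le_one,
      max_eq_right (by linarith : (2 * u) ≤ -1),
      min_eq_left (by norm_num : (-1 : ℝ) ≤ 1)]
    ring
  · rcases le_total 1 (u + 1 / 2) with h1 | h1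
    · rw [max_eq_left h, min_eq_right h1,
        max_eq_left (by linarith : (-1 : ℝ) ≤ 2 * u),
        min_eq_right (by linarith : (1 : ℝ) ≤ 2 * u)]
      ring
    · rw [max_eq_left h, min_eq_left h1,
        max_eq_left (by linarith : (-1 : ℝ) ≤ 2 * u),
        min_eq_left (by linarith : (2 * u) ≤ 1)]
      ring

lemma cont_exp_half : Continuous fun x : ℝ => Real.exp (-x ^ 2 / 2) :=
  Real.continuous_exp.comp (((continuous_pow 2).neg).div_const 2)

lemma integrable_xexp_half : Integrable (fun x : ℝ => x * Real.exp (-x ^ 2 / 2)) := by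
  have h := integrable_mul_exp_neg_mul_sq (b := (1 / 2 : ℝ)) (by norm_num)
  refine h.congr ?_
  filter_upwards with x
  congr 1
  ring

lemma tendsto_arg_atBot :
    Filter.Tendsto (fun x : ℝ => -x ^ 2 / 2) Filter.atBot Filter.atBot := by
  have hx2 : Filter.Tendsto (fun x : ℝ => x ^ 2) Filter.atBot Filter.atTop := by
    have h := (Filter.tendsto_pow_atTop (α := ℝ) (n := 2) (by norm_num)).comp
      Filter.tendsto_neg_atBot_atTop
    refine h.congr fun x => ?_
    simp [Function.comp, neg_sq]
  have h2 := Filter.tendsto_neg_atTop_atBot.comp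
    (hx2.atTop_div_const (by norm_num : (0:ℝ) < 2))
  refine h2.congr fun x => ?_
  simp [Function.comp, neg_div]

lemma tendsto_arg_atTop :
    Filter.Tendsto (fun x : ℝ => -x ^ 2 / 2) Filter.atTop Filter.atBot := by
  have hx2 : Filter.Tendsto (fun x : ℝ => x ^ 2) Filter.atTop Filter.atTop :=
    Filter.tendsto_pow_atTop (by norm_num)
  have h2 := Filter.tendsto_neg_atTop_atBot.comp
    (hx2.atTop_div_const (by norm_num : (0:ℝ) < 2))
  refine h2.congr fun x => ?_
  simp [Function.comp, neg_div]

lemma tendsto_exp_half_atBot :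
    Filter.Tendsto (fun x : ℝ => Real.exp (-x ^ 2 / 2)) Filter.atBot (nhds 0) :=
  Real.tendsto_exp_atBot.comp tendsto_arg_atBot

lemma tendsto_exp_half_atTop :
    Filter.Tendsto (fun x : ℝ => Real.exp (-x ^ 2 / 2)) Filter.atTop (nhds 0) :=
  Real.tendsto_exp_atBot.comp tendsto_arg_atTop

lemma hasDerivAt_exp_half (x : ℝ) :
    HasDerivAt (fun x : ℝ => Real.exp (-x ^ 2 / 2)) (Real.exp (-x ^ 2 / 2) * (-x)) x := by
  have h1 : HasDerivAt (fun x : ℝ => -x ^ 2 / 2) (-x) x := by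
    have := ((hasDerivAt_pow 2 x).neg).div_const 2
    simpa using this.congr_deriv (by ring)
  exact h1.exp

/-- Core Gaussian computation:
`∫ clip(p + m x, -1, 1) · x e^{-x²/2} dx = m ∫_a^b e^{-x²/2} dx`. -/
lemma core_integral (p m a b : ℝ) (hab : a < b) (ha : p + m * a = -1) (hb : p + m * b = 1) :
    ∫ x : ℝ, min (max (p + m * x) (-1)) 1 * (x * Real.exp (-x ^ 2 / 2))
      = m * ∫ x in a..b, Real.exp (-x ^ 2 / 2) := by
  have hm : 0 < m := by nlinarith
  set f : ℝ → ℝ := fun x => min (max (p + m * x) (-1)) 1 * (x * Real.exp (-x ^ 2 / 2)) with hf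
  have hG_cont : Continuous fun x : ℝ => min (max (p + m * x) (-1)) 1 :=
    ((continuous_const.add (continuous_const.mul continuous_id)).max continuous_const).min
      continuous_const
  have hf_int : Integrable f := by
    apply integrable_xexp_half.bdd_mul (c := 1) hG_cont.aestronglyMeasurable
    refine Filter.Eventually.of_forall (fun x => ?_)
    rw [Real.norm_eq_abs, abs_le]
    constructor
    · exact le_min (le_trans (by norm_num) (le_max_right _ _)) (by norm_num)
    · exact min_le_right _ _
  -- tail at -∞
  have tailIic : ∫ x in Set.Iic a, -(x * Real.exp (-x ^ 2 / 2)) = Real.exp (-a ^ 2 / 2) := by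
    have h := integral_Iic_of_hasDerivAt_of_tendsto'
      (f := fun x : ℝ => Real.exp (-x ^ 2 / 2))
      (f' := fun x : ℝ => -(x * Real.exp (-x ^ 2 / 2))) (a := a) (m := 0)
      (fun x _ => ((hasDerivAt_exp_half x).congr_deriv (by ring)))
      integrable_xexp_half.neg.integrableOn tendsto_exp_half_atBot
    simpa using h
  -- tail at +∞
  have tailIoi : ∫ x in Set.Ioi b, x * Real.exp (-x ^ 2 / 2) = Real.exp (-b ^ 2 / 2) := by
    have h := integral_Ioi_of_hasDerivAt_of_tendsto'
      (f := fun x : ℝ => -Real.exp (-x ^ 2 / 2))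
      (f' := fun x : ℝ => x * Real.exp (-x ^ 2 / 2)) (a := b) (m := 0)
      (fun x _ => ((hasDerivAt_exp_half x).neg.congr_deriv (by ring)))
      integrable_xexp_half.integrableOn (by simpa using tendsto_exp_half_atTop.neg)
    simpa using h
  -- middle interval, via FTC
  have hexp_ii : IntervalIntegrable (fun x : ℝ => Real.exp (-x ^ 2 / 2)) volume a b :=
    cont_exp_half.intervalIntegrable a b
  have hL_cont : Continuous fun x : ℝ => (p + m * x) * (x * Real.exp (-x ^ 2 / 2)) :=
    (continuous_const.add (continuous_const.mul continuous_id)).mul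
      (continuous_id.mul cont_exp_half)
  have ftc : ∫ x in a..b,
        ((p + m * x) * (x * Real.exp (-x ^ 2 / 2)) - m * Real.exp (-x ^ 2 / 2))
      = (-(p + m * b) * Real.exp (-b ^ 2 / 2)) - (-(p + m * a) * Real.exp (-a ^ 2 / 2)) := by
    apply intervalIntegral.integral_eq_sub_of_hasDerivAt
    · intro x _
      have h1 : HasDerivAt (fun x : ℝ => -(p + m * x)) (-m) x := by
        have := ((hasDerivAt_const x p).add ((hasDerivAt_id x).const_mul m)).neg
        exact this.congr_deriv (by ring)
      have h2 := h1.mul (hasDerivAt_exp_half x)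
      exact h2.congr_deriv (by ring)
    · exact (hL_cont.sub (continuous_const.mul cont_exp_half)).intervalIntegrable a b
  have hmid : ∫ x in a..b, (p + m * x) * (x * Real.exp (-x ^ 2 / 2))
      = (-Real.exp (-b ^ 2 / 2) - Real.exp (-a ^ 2 / 2))
        + m * ∫ x in a..b, Real.exp (-x ^ 2 / 2) := by
    have hsub := intervalIntegral.integral_sub (hL_cont.intervalIntegrable a b)
      ((hexp_ii.const_mul m))
    rw [ftc] at hsub
    have hconst : ∫ x in a..b, m * Real.exp (-x ^ 2 / 2)
        = m * ∫ x in a..b, Real.exp (-x ^ 2 / 2) := intervalIntegral.integral_const_mul _ _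
    rw [hconst] at hsub
    rw [ha, hb] at hsub
    linarith [hsub]
  -- split the real line
  have split1 : (∫ x in Set.Iic a, f x) + (∫ x in Set.Ioi a, f x) = ∫ x, f x :=
    intervalIntegral.integral_Iic_add_Ioi hf_int.integrableOn hf_int.integrableOn
  have split2 : (∫ x in Set.Ioc a b, f x) + (∫ x in Set.Ioi b, f x) = ∫ x in Set.Ioi a, f x := by
    rw [← setIntegral_union (Set.Ioc_disjoint_Ioi le_rfl) measurableSet_Ioi
      hf_int.integrableOn hf_int.integrableOn, Set.Ioc_union_Ioi_eq_Ioi hab.le]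
  -- identify pieces
  have piece1 : ∫ x in Set.Iic a, f x = Real.exp (-a ^ 2 / 2) := by
    rw [← tailIic]
    apply setIntegral_congr_fun measurableSet_Iic
    intro x hx
    have hx' : x ≤ a := hx
    have hle : p + m * x ≤ -1 := by nlinarith
    simp only [hf]
    rw [max_eq_right hle, min_eq_left (by norm_num : (-1:ℝ) ≤ 1)]
    ring
  have piece3 : ∫ x in Set.Ioi b, f x = Real.exp (-b ^ 2 / 2) := by
    rw [← tailIoi]
    apply setIntegral_congr_fun measurableSet_Ioi
    intro x hx
    have hx' : b < x := hx
    have hge : 1 ≤ p + m * x := by nlinarith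
    simp only [hf]
    rw [max_eq_left (by linarith : (-1:ℝ) ≤ p + m * x), min_eq_right hge]
    ring
  have piece2 : ∫ x in Set.Ioc a b, f x
      = (-Real.exp (-b ^ 2 / 2) - Real.exp (-a ^ 2 / 2))
        + m * ∫ x in a..b, Real.exp (-x ^ 2 / 2) := by
    rw [← hmid, ← intervalIntegral.integral_of_le hab.le]
    apply intervalIntegral.integral_congr
    intro x hx
    rw [Set.uIcc_of_le hab.le] at hx
    have h1 : a ≤ x := hx.1
    have h2 : x ≤ b := hx.2
    have hge : -1 ≤ p + m * x := by nlinarith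
    have hle : p + m * x ≤ 1 := by nlinarith
    simp only [hf]
    rw [max_eq_left hge, min_eq_left hle]
  rw [← split1, ← split2, piece1, piece2, piece3]
  ring

lemma integral_exp_half_eq_erf (a b : ℝ) :
    ∫ x in a..b, Real.exp (-x ^ 2 / 2)
      = Real.sqrt 2 * (Real.sqrt π / 2)
          * (erf (b / Real.sqrt 2) - erf (a / Real.sqrt 2)) := by
  have h2 : Real.sqrt 2 ≠ 0 := by positivity
  have hπ : Real.sqrt π ≠ 0 := by positivity
  have key : ∀ x : ℝ, Real.exp (-x ^ 2 / 2) = Real.exp (-(x / Real.sqrt 2) ^ 2) := by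
    intro x
    congr 1
    rw [div_pow, Real.sq_sqrt (by norm_num : (0:ℝ) ≤ 2)]
    ring
  have hstep : ∫ x in a..b, Real.exp (-x ^ 2 / 2)
      = Real.sqrt 2 • ∫ t in (a / Real.sqrt 2)..(b / Real.sqrt 2), Real.exp (-t ^ 2) := by
    rw [← intervalIntegral.integral_comp_div (f := fun t => Real.exp (-t ^ 2)) h2]
    apply intervalIntegral.integral_congr
    intro x _
    exact key x
  rw [hstep]
  have hsplit : ∫ t in (a / Real.sqrt 2)..(b / Real.sqrt 2), Real.exp (-t ^ 2)
      = (∫ t in (0:ℝ)..(b / Real.sqrt 2), Real.exp (-t ^ 2))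
        - ∫ t in (0:ℝ)..(a / Real.sqrt 2), Real.exp (-t ^ 2) := by
    have hc : Continuous fun t : ℝ => Real.exp (-t ^ 2) :=
      Real.continuous_exp.comp (continuous_pow 2).neg
    rw [intervalIntegral.integral_interval_sub_left
      (hc.intervalIntegrable _ _) (hc.intervalIntegrable _ _)]
  rw [hsplit]
  unfold erf
  rw [smul_eq_mul]
  field_simp

theorem alpha_formula_clipped_sigmoid
    {Ω : Type*} [MeasurableSpace Ω] (μ : Measure Ω) [IsProbabilityMeasure μ]
    (δ Y : Ω → ℝ) (hδm : Measurable δ) (hYm : Measurable Y)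
    (hδlaw : μ.map δ = gaussianReal 0 1)
    (hYrange : ∀ ω, Y ω = 1 ∨ Y ω = -1)
    (Δ s β ε : ℝ) (hs : 0 < s) (hβ : 0 < β) (hε : ε ∈ Set.Icc (0 : ℝ) (1 / 2))
    (hcond : μ[Y | MeasurableSpace.comap δ inferInstance] =ᵐ[μ]
      fun ω => 2 * (ε + (1 - 2 * ε) * min (max (s * (Δ + β * δ ω) + 1 / 2) 0) 1) - 1) :
    ∫ ω, Y ω * δ ω ∂μ =
      (1 - 2 * ε) * s * β *
        (erf ((Δ + 1 / (2 * s)) / (β * Real.sqrt 2)) -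
          erf ((Δ - 1 / (2 * s)) / (β * Real.sqrt 2))) := by
  have hgr : gaussianReal 0 1
      = volume.withDensity fun x => ((gaussianPDFReal 0 1 x).toNNReal : ℝ≥0∞) := by
    rw [gaussianReal_of_var_ne_zero _ one_ne_zero]; rfl
  have hpdf : ∀ x : ℝ, gaussianPDFReal 0 1 x
      = (Real.sqrt (2 * π))⁻¹ * Real.exp (-x ^ 2 / 2) := by
    intro x
    simp [gaussianPDFReal, neg_div]
  have hpdf_meas : Measurable fun x : ℝ => (gaussianPDFReal 0 1 x).toNNReal :=
    (measurable_gaussianPDFReal 0 1).real_toNNReal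
  have hpdf_nonneg : ∀ x : ℝ, 0 ≤ gaussianPDFReal 0 1 x := gaussianPDFReal_nonneg 0 1
  -- integrability of δ
  have hδint : Integrable δ μ := by
    have hid : Integrable (fun x : ℝ => x) (gaussianReal 0 1) := by
      rw [hgr, integrable_withDensity_iff_integrable_smul hpdf_meas]
      have hbase : Integrable (fun x : ℝ =>
          (Real.sqrt (2 * π))⁻¹ * (x * Real.exp (-x ^ 2 / 2))) :=
        integrable_xexp_half.const_mul _
      refine hbase.congr ?_
      filter_upwards with x
      rw [NNReal.smul_def, Real.coe_toNNReal _ (hpdf_nonneg x), smul_eq_mul, hpdf x]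
      ring
    have := (integrable_map_measure (f := δ) (g := fun x : ℝ => x)
      aestronglyMeasurable_id hδm.aemeasurable).mp (by rwa [hδlaw])
    exact this
  have hYbound : ∀ ω, ‖Y ω‖ ≤ 1 := by
    intro ω; rcases hYrange ω with h | h <;> simp [h]
  have hYint : Integrable Y μ := by
    refine (integrable_const (1:ℝ)).mono' hYm.aestronglyMeasurable ?_
    filter_upwards with ω using hYbound ω
  have hδYint : Integrable (δ * Y) μ := by
    have := hδint.bdd_mul (c := 1) hYm.aestronglyMeasurable
      (Filter.Eventually.of_forall hYbound)
    -- this : Integrable (fun ω => Y ω * δ ω)... check order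
    refine this.congr ?_
    filter_upwards with ω
    simp [mul_comm]
  have hm : MeasurableSpace.comap δ inferInstance ≤ ‹MeasurableSpace Ω› := hδm.comap_le
  have hδ_sm : StronglyMeasurable[MeasurableSpace.comap δ inferInstance] δ :=
    (Measurable.of_comap_le le_rfl).stronglyMeasurable
  have hpull := condExp_mul_of_stronglyMeasurable_left hδ_sm hδYint hYint
  -- step 1: replace Y by its conditional expectation
  have step1 : ∫ ω, Y ω * δ ω ∂μ
      = ∫ ω, δ ω * (μ[Y | MeasurableSpace.comap δ inferInstance]) ω ∂μ := by
    calc ∫ ω, Y ω * δ ω ∂μ = ∫ ω, (δ * Y) ω ∂μ := by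
          congr 1; funext ω; simp [mul_comm]
      _ = ∫ ω, (μ[δ * Y | MeasurableSpace.comap δ inferInstance]) ω ∂μ :=
          (integral_condExp hm).symm
      _ = ∫ ω, δ ω * (μ[Y | MeasurableSpace.comap δ inferInstance]) ω ∂μ := by
          apply integral_congr_ae
          filter_upwards [hpull] with ω hω
          simpa using hω
  rw [step1]
  -- step 2: plug in the conditional expectation
  have step2 : ∫ ω, δ ω * (μ[Y | MeasurableSpace.comap δ inferInstance]) ω ∂μ
      = ∫ ω, δ ω * (2 * (ε + (1 - 2 * ε)
          * min (max (s * (Δ + β * δ ω) + 1 / 2) 0) 1) - 1) ∂μ := by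
    apply integral_congr_ae
    filter_upwards [hcond] with ω hω
    rw [hω]
  rw [step2]
  -- step 3: change of variables to the Gaussian law
  set g : ℝ → ℝ := fun x =>
    x * (2 * (ε + (1 - 2 * ε) * min (max (s * (Δ + β * x) + 1 / 2) 0) 1) - 1) with hg
  have hg_cont : Continuous g := by
    apply continuous_id.mul
    apply Continuous.sub _ continuous_const
    apply continuous_const.mul
    apply continuous_const.add
    apply continuous_const.mul
    exact (((continuous_const.mul (continuous_const.add
      (continuous_const.mul continuous_id))).add continuous_const).max
      continuous_const).min continuous_const
  have step3 : ∫ ω, δ ω * (2 * (ε + (1 - 2 * ε)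
        * min (max (s * (Δ + β * δ ω) + 1 / 2) 0) 1) - 1) ∂μ
      = ∫ x, g x ∂(gaussianReal 0 1) := by
    rw [← hδlaw]
    exact (integral_map hδm.aemeasurable hg_cont.aestronglyMeasurable).symm
  rw [step3, hgr, integral_withDensity_eq_integral_smul hpdf_meas]
  -- step 4: rewrite integrand
  have step4 : ∀ x : ℝ, (gaussianPDFReal 0 1 x).toNNReal • g x
      = ((Real.sqrt (2 * π))⁻¹ * (1 - 2 * ε))
        * (min (max (2 * s * Δ + 2 * s * β * x) (-1)) 1 * (x * Real.exp (-x ^ 2 / 2))) := by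
    intro x
    rw [NNReal.smul_def, Real.coe_toNNReal _ (hpdf_nonneg x), smul_eq_mul, hpdf x, hg]
    have := clip_eq ε (s * (Δ + β * x))
    simp only []
    rw [this]
    have harg : 2 * (s * (Δ + β * x)) = 2 * s * Δ + 2 * s * β * x := by ring
    rw [harg]
    ring
  rw [integral_congr_ae (Filter.Eventually.of_forall step4), integral_const_mul]
  -- step 5: core computation
  have hb2 : β ≠ 0 := hβ.ne'
  have hs2 : s ≠ 0 := hs.ne'
  have hab : (-(Δ + 1 / (2 * s)) / β) < ((1 / (2 * s) - Δ) / β) := by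
    rw [div_lt_div_iff_of_pos_right hβ]
    have : 0 < 1 / (2 * s) := by positivity
    linarith
  have hcore := core_integral (2 * s * Δ) (2 * s * β)
    (-(Δ + 1 / (2 * s)) / β) ((1 / (2 * s) - Δ) / β) hab
    (by field_simp <;> ring) (by field_simp <;> ring)
  rw [hcore, integral_exp_half_eq_erf]
  -- step 6: final algebra with erf oddness
  have h2 : Real.sqrt 2 ≠ 0 := by positivity
  have hπ : Real.sqrt π ≠ 0 := by positivity
  have hsqrt2π : Real.sqrt (2 * π) = Real.sqrt 2 * Real.sqrt π :=
    Real.sqrt_mul (by norm_num) π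
  have hargb : ((1 / (2 * s) - Δ) / β) / Real.sqrt 2
      = -((Δ - 1 / (2 * s)) / (β * Real.sqrt 2)) := by
    rw [div_div, ← neg_div, neg_sub]
  have harga : (-(Δ + 1 / (2 * s)) / β) / Real.sqrt 2
      = -((Δ + 1 / (2 * s)) / (β * Real.sqrt 2)) := by
    rw [div_div, neg_div]
  rw [hargb, harga, erf_neg, erf_neg, hsqrt2π]
  field_simp
  ring
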